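/- For every continuous function f : ℝ³ → ℂ that is ℤ³-periodic (f(x+k) = f(x) for all k ∈ ℤ³), one has lim_{ε→0⁺} ε^{3/2} ∫_{ℝ³} f(x) e^{−επ|x|²} dx = ∫_{[0,1]³} f(x) dx. -/

import Mathlib

open MeasureTheory Real Filter Function Set
open scoped ENNReal Topology RealInnerProductSpace FourierTransform

noncomputable section

abbrev V3 : Type := EuclideanSpace ℝ (Fin 3)
abbrev X3 : Type := Fin 3 → ℝ

/-- Japanese bracket `⟨v⟩ = (1+|v|²)^{1/2}`. -/
def jap (v : V3) : ℝ := Real.sqrt (1 + ‖v‖ ^ 2)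

/-- `⟨q⟩` for integer frequencies `q ∈ ℤ³`. -/
def japZ (m : Fin 3 → ℤ) : ℝ := Real.sqrt (1 + ∑ i, (m i : ℝ) ^ 2)

/-- Fundamental domain of the torus `T³`. -/
def cube : Set X3 := Set.Icc 0 1

/-- Surface measure on the unit sphere `S² ⊂ ℝ³`
(two–dimensional Hausdorff measure restricted to the sphere). -/
def sphMeas : Measure V3 :=
  (MeasureTheory.Measure.hausdorffMeasure 2 : Measure V3).restrict (Metric.sphere 0 1)

/-- Post-collisional velocity `v' = (v+v_*)/2 + (|v-v_*|/2)σ`. -/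
def vPost (v vs σ : V3) : V3 := (2 : ℝ)⁻¹ • (v + vs) + (‖v - vs‖ / 2) • σ

/-- Post-collisional velocity `v'_* = (v+v_*)/2 − (|v-v_*|/2)σ`. -/
def vsPost (v vs σ : V3) : V3 := (2 : ℝ)⁻¹ • (v + vs) - (‖v - vs‖ / 2) • σ

/-- Boltzmann collision kernel `B(u,σ) = |u|^γ b((u/|u|)·σ)`. -/
def Bker (γ : ℝ) (b : ℝ → ℝ) (u σ : V3) : ℝ := ‖u‖ ^ γ * b ⟪‖u‖⁻¹ • u, σ⟫

/-- Assumptions on the non-cutoff angular kernel `b` with singularity exponent `1+2s`. -/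
structure AngularKernel (s : ℝ) (b : ℝ → ℝ) : Prop where
  nonneg : ∀ t, 0 ≤ b t
  vanish : ∀ t : ℝ, t < 0 → b t = 0
  bounds : ∃ C > (0 : ℝ), ∀ θ ∈ Set.Ioc (0 : ℝ) (π / 2),
    C * θ ^ (-1 - 2 * s) ≤ Real.sin θ * b (Real.cos θ) ∧
      Real.sin θ * b (Real.cos θ) ≤ C⁻¹ * θ ^ (-1 - 2 * s)

/-- Boltzmann collision operator `Q(g,f)`. -/
def Qop (γ : ℝ) (b : ℝ → ℝ) (g f : V3 → ℝ) (v : V3) : ℝ :=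
  ∫ vs, (∫ σ, Bker γ b (v - vs) σ *
    (g (vsPost v vs σ) * f (vPost v vs σ) - g vs * f v) ∂sphMeas)

/-- Cutoff collision operator `Q_ε(g,f)`, with the deviation angle `θ ≥ ε`. -/
def Qeps (γ : ℝ) (b : ℝ → ℝ) (ε : ℝ) (g f : V3 → ℝ) (v : V3) : ℝ :=
  ∫ vs, (∫ σ, (if ⟪‖v - vs‖⁻¹ • (v - vs), σ⟫ ≤ Real.cos ε then
    Bker γ b (v - vs) σ * (g (vsPost v vs σ) * f (vPost v vs σ) - g vs * f v)
    else 0) ∂sphMeas)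

/-- Weighted `L^p_l` norm `‖⟨·⟩^l f‖_{L^p}` (extended-real valued). -/
def wLp (p : ℝ≥0∞) (l : ℝ) (f : V3 → ℂ) : ℝ≥0∞ :=
  eLpNorm (fun v => jap v ^ l • f v) p volume

/-- Weighted Sobolev norm `‖f‖_{H^m_l} = ‖⟨D⟩^m (⟨·⟩^l f)‖_{L²}`, computed on the
Fourier side via Plancherel. -/
def sobN (m l : ℝ) (f : V3 → ℂ) : ℝ≥0∞ :=
  eLpNorm (fun ξ => jap ξ ^ m • 𝓕 (fun v => jap v ^ l • f v) ξ) 2 volume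

/-- Character `e^{2πi m·x}` on the torus. -/
def eX (m : Fin 3 → ℤ) (x : X3) : ℂ :=
  Complex.exp (((2 * π * ∑ i, (m i : ℝ) * x i : ℝ) : ℂ) * Complex.I)

/-- Fourier coefficient in the space variable: `F_x(f)(m,v) = ∫_{T³} e^{-2πim·x} f(x,v) dx`. -/
def Fx (f : X3 → V3 → ℂ) (m : Fin 3 → ℤ) : V3 → ℂ :=
  fun v => ∫ x in cube, (eX m x)⁻¹ * f x v

def toC (f : X3 → V3 → ℝ) : X3 → V3 → ℂ := fun x v => (f x v : ℂ)
def toC1 (f : V3 → ℝ) : V3 → ℂ := fun v => (f v : ℂ)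

/-- Squared mixed norm `‖f‖²_{H^n_x X} = Σ_q ⟨q⟩^{2n} ‖F_x(f)(q,·)‖²_X`. -/
def hxNSq (n : ℝ) (N : (V3 → ℂ) → ℝ≥0∞) (f : X3 → V3 → ℂ) : ℝ≥0∞ :=
  ∑' q : Fin 3 → ℤ, ENNReal.ofReal (japZ q ^ (2 * n)) * N (Fx f q) ^ 2

/-- Squared `H^n_x H^m_l` norm. -/
def hxSobSq (n m l : ℝ) (f : X3 → V3 → ℂ) : ℝ≥0∞ := hxNSq n (sobN m l) f

/-- Squared `H^n_x L²_l` norm. -/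
def hxL2Sq (n l : ℝ) (f : X3 → V3 → ℂ) : ℝ≥0∞ := hxNSq n (wLp 2 l) f

/-- `L^∞_x L²_l` norm. -/
def linfxL2 (l : ℝ) (f : X3 → V3 → ℝ) : ℝ≥0∞ :=
  essSup (fun x => wLp 2 l fun v => (f x v : ℂ)) volume

/-- A dyadic partition of unity `ψ, φ` on `ℝ³`, as used for the Littlewood–Paley
decompositions in phase and frequency space. -/
structure DyadicPartition (ψv φv : V3 → ℝ) : Prop where
  smooth_psi : ContDiff ℝ ((⊤ : ℕ∞) : WithTop ℕ∞) ψv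
  smooth_phi : ContDiff ℝ ((⊤ : ℕ∞) : WithTop ℕ∞) φv
  nonneg_psi : ∀ ξ, 0 ≤ ψv ξ
  nonneg_phi : ∀ ξ, 0 ≤ φv ξ
  radial_psi : ∀ ξ η : V3, ‖ξ‖ = ‖η‖ → ψv ξ = ψv η
  radial_phi : ∀ ξ η : V3, ‖ξ‖ = ‖η‖ → φv ξ = φv η
  supp_psi : ∀ ξ : V3, 4 / 3 < ‖ξ‖ → ψv ξ = 0
  supp_phi : ∀ ξ : V3, (‖ξ‖ < 3 / 4 ∨ 8 / 3 < ‖ξ‖) → φv ξ = 0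
  partition : ∀ ξ : V3, ψv ξ + ∑' j : ℕ, φv ((2 : ℝ) ^ (-(j : ℝ)) • ξ) = 1

/-- Phase-space localization `P_k f = φ(2^{-k}·) f`, `k ≥ 0`. -/
def Pdy (φv : V3 → ℝ) (k : ℕ) (f : V3 → ℂ) : V3 → ℂ :=
  fun v => (φv ((2 : ℝ) ^ (-(k : ℝ)) • v) : ℂ) * f v

/-- Frequency localization `F_j f = ℱ⁻¹(φ(2^{-j}·) ℱ f)`, `j ≥ 0`. -/
def Fdy (φv : V3 → ℝ) (j : ℕ) (f : V3 → ℂ) : V3 → ℂ :=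
  𝓕⁻ fun ξ => (φv ((2 : ℝ) ^ (-(j : ℝ)) • ξ) : ℂ) * 𝓕 f ξ

/-- Frequency localization indexed by `j ∈ ℤ`, `j ≥ -1`, where `j = -1` uses `ψ`. -/
def FdyZ (ψv φv : V3 → ℝ) (j : ℤ) (f : V3 → ℂ) : V3 → ℂ :=
  𝓕⁻ fun ξ => ((if j = -1 then ψv ξ else φv ((2 : ℝ) ^ (-(j : ℝ)) • ξ)) : ℂ) * 𝓕 f ξ

/-- The frequencies `m = (±⌊2^{(1-ε)j}⌋, 0, 0) ∈ M_j`. -/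
def mIdx (ε : ℝ) (j : ℕ) (sgn : Bool) : Fin 3 → ℤ :=
  fun i => if i = 0 then (if sgn then 1 else -1) * ⌊(2 : ℝ) ^ ((1 - ε) * j)⌋ else 0

/-- The divergent sum in the definition of `R_sd(ℓ;ε,a)` (and of `H^n_sd(ℓ;ε,a)`):
`Σ_{j≥1} Σ_{l>aj} 2^{(2ℓa+2n(1-ε)+ε)j} Σ_{m∈M_j} ‖F_j P_l F_x(f)(m,·)‖²_{L²}`. -/
def rsdSum (φv : V3 → ℝ) (ℓ ε a n : ℝ) (f : X3 → V3 → ℝ) : ℝ≥0∞ :=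
  ∑' j : ℕ, ∑' l : ℕ,
    if 1 ≤ j ∧ a * j < l then
      ENNReal.ofReal ((2 : ℝ) ^ ((2 * ℓ * a + 2 * n * (1 - ε) + ε) * j)) *
        (eLpNorm (Fdy φv j (Pdy φv l (Fx (toC f) (mIdx ε j true)))) 2 volume ^ 2 +
          eLpNorm (Fdy φv j (Pdy φv l (Fx (toC f) (mIdx ε j false)))) 2 volume ^ 2)
    else 0

/-- Membership in the set of typical rough and slowly decaying data `R_sd(ℓ; ε, a)`. -/
def memRsd (φv : V3 → ℝ) (ℓ ε a : ℝ) (f : X3 → V3 → ℝ) : Prop :=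
  (∀ x v, 0 ≤ f x v) ∧ Measurable (fun p : X3 × V3 => f p.1 p.2) ∧
    (∀ (k : Fin 3 → ℤ) (x : X3) (v : V3), f (x + fun i => (k i : ℝ)) v = f x v) ∧
    linfxL2 ℓ f < ⊤ ∧ rsdSum φv ℓ ε a 0 f = ⊤

/-- Membership in the set of regular-in-`x` slowly decaying data `H^n_sd(ℓ; ε, a)`. -/
def memHnsd (φv : V3 → ℝ) (ℓ ε a n : ℝ) (f : X3 → V3 → ℝ) : Prop :=
  (∀ x v, 0 ≤ f x v) ∧ Measurable (fun p : X3 × V3 => f p.1 p.2) ∧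
    (∀ (k : Fin 3 → ℤ) (x : X3) (v : V3), f (x + fun i => (k i : ℝ)) v = f x v) ∧
    hxL2Sq n ℓ (toC f) < ⊤ ∧ rsdSum φv ℓ ε a n f = ⊤

/-- Test functions for the weak formulation of the Boltzmann equation: `C¹_t C²_{x,v}`
(here `C²` in all variables), periodic in `x`, compactly supported in `[0,∞)×T³×ℝ³`. -/
structure TestFn (φ : ℝ → X3 → V3 → ℝ) : Prop where
  smooth : ContDiff ℝ 2 fun p : ℝ × X3 × V3 => φ p.1 p.2.1 p.2.2
  periodicX : ∀ (t : ℝ) (k : Fin 3 → ℤ) (x : X3) (v : V3),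
    φ t (x + fun i => (k i : ℝ)) v = φ t x v
  compactSupp : ∃ R : ℝ, ∀ t x v, (R ≤ t ∨ R ≤ ‖v‖) → φ t x v = 0

/-- Smooth test functions on `ℝ_t × T³ × ℝ³_v`, compactly supported in `(t,v)`. -/
structure TestXV (φ : ℝ → X3 → V3 → ℝ) : Prop where
  smooth : ContDiff ℝ ((⊤ : ℕ∞) : WithTop ℕ∞) fun p : ℝ × X3 × V3 => φ p.1 p.2.1 p.2.2
  periodicX : ∀ (t : ℝ) (k : Fin 3 → ℤ) (x : X3) (v : V3),
    φ t (x + fun i => (k i : ℝ)) v = φ t x v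
  compactSupp : ∃ R : ℝ, ∀ t x v, (R ≤ |t| ∨ R ≤ ‖v‖) → φ t x v = 0

/-- Smooth test functions with time support inside `I`. -/
structure TestXVIn (I : Set ℝ) (φ : ℝ → X3 → V3 → ℝ) : Prop where
  smooth : ContDiff ℝ ((⊤ : ℕ∞) : WithTop ℕ∞) fun p : ℝ × X3 × V3 => φ p.1 p.2.1 p.2.2
  periodicX : ∀ (t : ℝ) (k : Fin 3 → ℤ) (x : X3) (v : V3),
    φ t (x + fun i => (k i : ℝ)) v = φ t x v
  suppT : ∀ t ∉ I, ∀ x v, φ t x v = 0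
  compactSupp : ∃ R : ℝ, ∀ t x v, (R ≤ |t| ∨ R ≤ ‖v‖) → φ t x v = 0

/-- Smooth test functions on `T³ × ℝ³_v`, compactly supported in `v`. -/
structure TestXV0 (φ : X3 → V3 → ℝ) : Prop where
  smooth : ContDiff ℝ ((⊤ : ℕ∞) : WithTop ℕ∞) fun p : X3 × V3 => φ p.1 p.2
  periodicX : ∀ (k : Fin 3 → ℤ) (x : X3) (v : V3), φ (x + fun i => (k i : ℝ)) v = φ x v
  compactV : ∃ R : ℝ, ∀ x v, R ≤ ‖v‖ → φ x v = 0

def ddt (φ : ℝ → X3 → V3 → ℝ) (t : ℝ) (x : X3) (v : V3) : ℝ :=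
  deriv (fun τ => φ τ x v) t

def vGradX (φ : ℝ → X3 → V3 → ℝ) (t : ℝ) (x : X3) (v : V3) : ℝ :=
  fderiv ℝ (fun y => φ t y v) x fun i => v i

/-- Entropy `H(f) = ∫∫ f log f`. -/
def Hfun (f : X3 → V3 → ℝ) : ℝ := ∫ x in cube, ∫ v, f x v * Real.log (f x v)

/-- Entropy dissipation functional `D(f)`. -/
def entDiss (γ : ℝ) (b : ℝ → ℝ) (f : X3 → V3 → ℝ) : ℝ :=
  (4 : ℝ)⁻¹ * ∫ x in cube, ∫ v, ∫ vs, (∫ σ, Bker γ b (v - vs) σ *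
    (f x (vsPost v vs σ) * f x (vPost v vs σ) - f x vs * f x v) *
    Real.log (f x (vsPost v vs σ) * f x (vPost v vs σ) / (f x vs * f x v)) ∂sphMeas)

/-- Product measure on `T³ × ℝ³`. -/
def tvMeas : Measure (X3 × V3) := (volume.restrict cube).prod volume

/-- Product measure on `A × T³ × ℝ³` for a time set `A`. -/
def tcubeMeas (A : Set ℝ) : Measure (ℝ × X3 × V3) :=
  (volume.restrict A).prod ((volume.restrict cube).prod volume)

/-- Weak solution of the Boltzmann equation `∂_t f + v·∇_x f = Q(f,f)` on `[0,T]×T³×ℝ³`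
with initial datum `f₀`. -/
structure IsWeakSolution (γ : ℝ) (b : ℝ → ℝ) (T : ℝ)
    (f₀ : X3 → V3 → ℝ) (f : ℝ → X3 → V3 → ℝ) : Prop where
  init_nonneg : ∀ x v, 0 ≤ f₀ x v
  init_periodicX : ∀ (k : Fin 3 → ℤ) (x : X3) (v : V3), f₀ (x + fun i => (k i : ℝ)) v = f₀ x v
  init_mass : Integrable (fun p : X3 × V3 => f₀ p.1 p.2 * (1 + ‖p.2‖ ^ 2)) tvMeas
  init_entropy : Integrable (fun p : X3 × V3 => f₀ p.1 p.2 * Real.log (f₀ p.1 p.2)) tvMeas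
  nonneg : ∀ t x v, 0 ≤ f t x v
  meas : Measurable fun p : ℝ × X3 × V3 => f p.1 p.2.1 p.2.2
  periodicX : ∀ (t : ℝ) (k : Fin 3 → ℤ) (x : X3) (v : V3),
    f t (x + fun i => (k i : ℝ)) v = f t x v
  bddL1 : ∃ C : ℝ, ∀ᵐ t ∂volume.restrict (Set.Icc 0 T),
    (∫ x in cube, ∫ v, f t x v * (1 + ‖v‖ ^ 2)) ≤ C ∧
      (∫ x in cube, ∫ v, f t x v * |Real.log (f t x v)|) ≤ C
  massCons : ∀ t ∈ Set.Icc 0 T,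
    (∫ x in cube, ∫ v, f t x v) = ∫ x in cube, ∫ v, f₀ x v
  momCons : ∀ t ∈ Set.Icc 0 T,
    (∫ x in cube, ∫ v, f t x v • v : V3) = ∫ x in cube, ∫ v, f₀ x v • v
  energyCons : ∀ t ∈ Set.Icc 0 T,
    (∫ x in cube, ∫ v, f t x v * ‖v‖ ^ 2) = ∫ x in cube, ∫ v, f₀ x v * ‖v‖ ^ 2
  entropyIneq : ∀ T' ∈ Set.Ioc 0 T,
    Hfun (f T') + (∫ t in Set.Icc 0 T', entDiss γ b (f t)) ≤ Hfun f₀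
  weakForm : ∀ φ : ℝ → X3 → V3 → ℝ, TestFn φ → ∀ T' ∈ Set.Icc 0 T,
    Tendsto (fun ε : ℝ => ∫ t in Set.Icc 0 T', ∫ x in cube, ∫ v,
        Qeps γ b ε (f t x) (f t x) v * φ t x v) (𝓝[>] 0)
      (𝓝 ((∫ x in cube, ∫ v, f T' x v * φ T' x v) -
          (∫ x in cube, ∫ v, f₀ x v * φ 0 x v) -
          (∫ t in Set.Icc 0 T', ∫ x in cube, ∫ v, f t x v * ddt φ t x v) -
          (∫ t in Set.Icc 0 T', ∫ x in cube, ∫ v, f t x v * vGradX φ t x v)))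

/-- Iterated partial derivative `∂^α_x` in the space variable. -/
def pdX (i : Fin 3) (g : X3 → ℝ) : X3 → ℝ := fun x => fderiv ℝ g x (Pi.single i 1)

def pdMX (α : Fin 3 → ℕ) (g : X3 → ℝ) : X3 → ℝ :=
  (pdX 0)^[α 0] ((pdX 1)^[α 1] ((pdX 2)^[α 2] g))

/-- Iterated partial derivative `∂^α_v` in the velocity variable. -/
def pdV (i : Fin 3) (g : V3 → ℝ) : V3 → ℝ :=
  fun v => fderiv ℝ g v (EuclideanSpace.single i 1)

def pdMV (α : Fin 3 → ℕ) (g : V3 → ℝ) : V3 → ℝ :=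
  (pdV 0)^[α 0] ((pdV 1)^[α 1] ((pdV 2)^[α 2] g))

/-- Order `|α|` of a multi-index. -/
def mOrder (α : Fin 3 → ℕ) : ℕ := α 0 + α 1 + α 2

/-- `g` is the weak derivative `∂^α_x u` on `T³×ℝ³` (against smooth test functions). -/
def HasWeakDerivX (α : Fin 3 → ℕ) (u g : X3 → V3 → ℝ) : Prop :=
  Measurable (fun p : X3 × V3 => g p.1 p.2) ∧
  ∀ φ : X3 → V3 → ℝ, TestXV0 φ →
    Integrable (fun p : X3 × V3 => g p.1 p.2 * φ p.1 p.2) tvMeas ∧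
    (∫ x in cube, ∫ v, u x v * pdMX α (fun y => φ y v) x) =
      (-1 : ℝ) ^ mOrder α * ∫ x in cube, ∫ v, g x v * φ x v

/-- `g` is the weak derivative `∂^α_v u` on `T³×ℝ³` (against smooth test functions). -/
def HasWeakDerivV (α : Fin 3 → ℕ) (u g : X3 → V3 → ℝ) : Prop :=
  Measurable (fun p : X3 × V3 => g p.1 p.2) ∧
  ∀ φ : X3 → V3 → ℝ, TestXV0 φ →
    Integrable (fun p : X3 × V3 => g p.1 p.2 * φ p.1 p.2) tvMeas ∧
    (∫ x in cube, ∫ v, u x v * pdMV α (φ x) v) =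
      (-1 : ℝ) ^ mOrder α * ∫ x in cube, ∫ v, g x v * φ x v

/-- Weighted `L¹_x L¹_w` norm `∫∫ |g| ⟨v⟩^w`. -/
def wL1 (w : ℝ) (g : X3 → V3 → ℝ) : ℝ≥0∞ :=
  ∫⁻ x in cube, ∫⁻ v, ENNReal.ofReal (|g x v| * jap v ^ w)

/-- `⟨D_x⟩^a`, defined through the Fourier series in `x`. -/
def DxPowX (a : ℝ) (g : X3 → ℂ) : X3 → ℂ :=
  fun x => ∑' m : Fin 3 → ℤ, (japZ m ^ a : ℝ) • ((∫ y in cube, (eX m y)⁻¹ * g y) * eX m x)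

/-- `⟨D_v⟩^r`, defined through the Fourier transform in `v`. -/
def DvPow (r : ℝ) (g : V3 → ℂ) : V3 → ℂ :=
  𝓕⁻ fun ξ => (jap ξ ^ r : ℝ) • 𝓕 g ξ

/-- The normalized Gaussian `μ(v) = e^{-|v|²/2}/(2π)^{3/2}`. -/
def stdGauss (v : V3) : ℝ := Real.exp (-‖v‖ ^ 2 / 2) / (2 * π) ^ ((3 : ℝ) / 2)


/-- Smooth compactly supported test functions on `ℝ³_v`. -/
structure TestV (φ : V3 → ℝ) : Prop where
  smooth : ContDiff ℝ ((⊤ : ℕ∞) : WithTop ℕ∞) φ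
  compactV : ∃ R : ℝ, ∀ v, R ≤ ‖v‖ → φ v = 0

/-- `g` is the weak derivative `∂^α_v u` on `ℝ³` (spatially homogeneous setting). -/
def HasWeakDerivV1 (α : Fin 3 → ℕ) (u g : V3 → ℝ) : Prop :=
  Measurable g ∧ ∀ φ : V3 → ℝ, TestV φ →
    Integrable (fun v => g v * φ v) ∧
    (∫ v, u v * pdMV α φ v) = (-1 : ℝ) ^ mOrder α * ∫ v, g v * φ v

/-- Strong solution (in the distributional sense, with the collision term interpreted
through the cutoff limit) of the Boltzmann equation on `(0,T)×T³×ℝ³`, together with the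
macroscopic bounds `m₀ ≤ ρ ≤ M₀`, `E ≤ E₀`, `H ≤ H₀`. -/
structure StrongSol (γ : ℝ) (b : ℝ → ℝ) (T : ℝ) (f : ℝ → X3 → V3 → ℝ)
    (m₀ M₀ E₀ H₀ : ℝ) : Prop where
  nonneg : ∀ t x v, 0 ≤ f t x v
  meas : Measurable fun p : ℝ × X3 × V3 => f p.1 p.2.1 p.2.2
  periodicX : ∀ (t : ℝ) (k : Fin 3 → ℤ) (x : X3) (v : V3),
    f t (x + fun i => (k i : ℝ)) v = f t x v
  pde : ∀ φ : ℝ → X3 → V3 → ℝ, TestXVIn (Set.Ioo 0 T) φ →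
    Tendsto (fun ε : ℝ => ∫ t in Set.Ioo 0 T, ∫ x in cube, ∫ v,
        Qeps γ b ε (f t x) (f t x) v * φ t x v) (𝓝[>] 0)
      (𝓝 (-(∫ t in Set.Ioo 0 T, ∫ x in cube, ∫ v,
        f t x v * (ddt φ t x v + vGradX φ t x v))))
  massLB : ∀ t ∈ Set.Ioo (0 : ℝ) T, ∀ x, m₀ ≤ ∫ v, f t x v
  massUB : ∀ t ∈ Set.Ioo (0 : ℝ) T, ∀ x, (∫ v, f t x v) ≤ M₀
  energyUB : ∀ t ∈ Set.Ioo (0 : ℝ) T, ∀ x, (∫ v, f t x v * ‖v‖ ^ 2) ≤ E₀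
  entropyUB : ∀ t ∈ Set.Ioo (0 : ℝ) T, ∀ x, (∫ v, f t x v * Real.log (f t x v)) ≤ H₀

/-- Solution (in the distributional sense, with the collision terms interpreted through
the cutoff limit) of the linear Boltzmann equation `∂_t h + v·∇_x h = Q(μ,h) + Q(h,μ)`. -/
structure LinearSol (γ : ℝ) (b : ℝ → ℝ) (T : ℝ) (h : ℝ → X3 → V3 → ℝ) : Prop where
  meas : Measurable fun p : ℝ × X3 × V3 => h p.1 p.2.1 p.2.2
  periodicX : ∀ (t : ℝ) (k : Fin 3 → ℤ) (x : X3) (v : V3),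
    h t (x + fun i => (k i : ℝ)) v = h t x v
  pde : ∀ φ : ℝ → X3 → V3 → ℝ, TestXVIn (Set.Ioo 0 T) φ →
    Tendsto (fun ε : ℝ => ∫ t in Set.Ioo 0 T, ∫ x in cube, ∫ v,
        (Qeps γ b ε stdGauss (h t x) v + Qeps γ b ε (h t x) stdGauss v) * φ t x v)
      (𝓝[>] 0)
      (𝓝 (-(∫ t in Set.Ioo 0 T, ∫ x in cube, ∫ v,
        h t x v * (ddt φ t x v + vGradX φ t x v))))

/-- Cutoff pairing `⟨Q_ε(g,h), f⟩` for complex-valued functions. -/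
def QpairEps (γ : ℝ) (b : ℝ → ℝ) (ε : ℝ) (g h f : V3 → ℂ) : ℂ :=
  ∫ v, ∫ vs, (∫ σ, (if ⟪‖v - vs‖⁻¹ • (v - vs), σ⟫ ≤ Real.cos ε then
      (Bker γ b (v - vs) σ : ℂ) * (g (vsPost v vs σ) * h (vPost v vs σ) - g vs * h v) * f v
    else 0) ∂sphMeas)

/-- Embedding of integer frequencies into `ℝ³`. -/
def mV (m : Fin 3 → ℤ) : V3 := (WithLp.equiv 2 (Fin 3 → ℝ)).symm fun i => (m i : ℝ)

/-- Fourier transform on `ℝ³ × ℝ³`. -/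
def FT6 (g : V3 → V3 → ℂ) (m ξ : V3) : ℂ :=
  ∫ x : V3, ∫ v : V3,
    Complex.exp (((-(2 * π * (⟪x, m⟫ + ⟪v, ξ⟫)) : ℝ) : ℂ) * Complex.I) * g x v

/-- The Fourier multiplier operator `T_M` on `ℝ³ × ℝ³` with symbol `M`. -/
def TMop (M : V3 → V3 → ℂ) (g : V3 → V3 → ℂ) (x v : V3) : ℂ :=
  ∫ m : V3, ∫ ξ : V3,
    Complex.exp (((2 * π * (⟪x, m⟫ + ⟪v, ξ⟫) : ℝ) : ℂ) * Complex.I) * (M m ξ * FT6 g m ξ)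

/-- Mixed Fourier transform on `T³ × ℝ³`. -/
def FTmix (f : X3 → V3 → ℂ) (m : Fin 3 → ℤ) (ξ : V3) : ℂ :=
  ∫ x in cube, ∫ v : V3,
    (eX m x)⁻¹ * (Complex.exp (((-(2 * π * ⟪v, ξ⟫) : ℝ) : ℂ) * Complex.I) * f x v)

/-- The multiplier operator `S_M` on `T³ × ℝ³` with symbol `M(m,ξ)`, `m ∈ ℤ³`. -/
def SMop (M : V3 → V3 → ℂ) (f : X3 → V3 → ℂ) (x : X3) (v : V3) : ℂ :=
  ∑' m : Fin 3 → ℤ, eX m x *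
    ∫ ξ : V3, Complex.exp (((2 * π * ⟪v, ξ⟫ : ℝ) : ℂ) * Complex.I) * (M (mV m) ξ * FTmix f m ξ)


namespace Statement14Aux

open Complex AddCircle

abbrev T1 := AddCircle (1 : ℝ)
abbrev XT := Fin 3 → T1

def qmap : X3 → XT := fun x i => (x i : T1)

lemma isOpenQuotientMap_qmap : IsOpenQuotientMap qmap :=
  IsOpenQuotientMap.piMap fun _ => QuotientAddGroup.isOpenQuotientMap_mk

lemma continuous_qmap : Continuous qmap := isOpenQuotientMap_qmap.continuous

def evalCM (i : Fin 3) : C(XT, T1) := ⟨fun p => p i, continuous_apply i⟩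

def chi (m : Fin 3 → ℤ) : C(XT, ℂ) := ∏ i, (fourier (m i)).comp (evalCM i)

lemma chi_apply (m : Fin 3 → ℤ) (p : XT) : chi m p = ∏ i, fourier (m i) (p i) := by
  simp [chi, ContinuousMap.prod_apply, evalCM]

lemma chi_mul (m m' : Fin 3 → ℤ) : chi m * chi m' = chi (m + m') := by
  ext p
  rw [ContinuousMap.mul_apply, chi_apply, chi_apply, chi_apply, ← Finset.prod_mul_distrib]
  exact Finset.prod_congr rfl fun i _ => fourier_add.symm

lemma chi_zero : chi 0 = 1 := by
  ext p
  rw [chi_apply]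
  simp [fourier_zero]

lemma chi_star (m : Fin 3 → ℤ) : star (chi m) = chi (-m) := by
  ext p
  rw [ContinuousMap.star_apply, chi_apply, chi_apply, star_prod]
  exact Finset.prod_congr rfl fun i _ => by
    rw [RCLike.star_def]
    exact fourier_neg.symm

lemma star_mem_span {a : C(XT, ℂ)} (ha : a ∈ Submodule.span ℂ (Set.range chi)) :
    star a ∈ Submodule.span ℂ (Set.range chi) := by
  induction ha using Submodule.span_induction with
  | mem x hx =>
    obtain ⟨m, rfl⟩ := hx
    rw [chi_star]
    exact Submodule.subset_span ⟨-m, rfl⟩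
  | zero => simpa using Submodule.zero_mem _
  | add x y hx hy ihx ihy => rw [star_add]; exact Submodule.add_mem _ ihx ihy
  | smul c x hx ih => rw [star_smul]; exact Submodule.smul_mem _ _ ih

def AA : StarSubalgebra ℂ C(XT, ℂ) where
  carrier := (Submodule.span ℂ (Set.range chi) : Set C(XT, ℂ))
  mul_mem' := by
    intro a b ha hb
    have h := Submodule.mul_mem_mul (ha : a ∈ Submodule.span ℂ (Set.range chi)) hb
    rw [Submodule.span_mul_span] at h
    refine Submodule.span_le.mpr ?_ h
    rintro x hx
    rw [Set.mem_mul] at hx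
    obtain ⟨u, hu, v, hv, rfl⟩ := hx
    obtain ⟨m, rfl⟩ := hu
    obtain ⟨m', rfl⟩ := hv
    exact Submodule.subset_span ⟨m + m', (chi_mul m m').symm⟩
  one_mem' := Submodule.subset_span ⟨0, chi_zero⟩
  add_mem' := fun ha hb => Submodule.add_mem _ ha hb
  zero_mem' := Submodule.zero_mem _
  algebraMap_mem' := fun c => by
    have h1 : (1 : C(XT, ℂ)) ∈ Submodule.span ℂ (Set.range chi) :=
      Submodule.subset_span ⟨0, chi_zero⟩
    have := Submodule.smul_mem _ c h1
    simpa [Algebra.algebraMap_eq_smul_one] using this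
  star_mem' := fun ha => star_mem_span ha

lemma chi_single (i : Fin 3) (p : XT) : chi (Pi.single i 1) p = toCircle (p i) := by
  rw [chi_apply,
    Finset.prod_eq_single i (fun j _ hj => by rw [Pi.single_eq_of_ne hj]; exact fourier_zero)
      (fun h => absurd (Finset.mem_univ i) h),
    Pi.single_eq_same]
  exact fourier_one

lemma AA_sep : AA.SeparatesPoints := by
  intro p p' hpp'
  have hex : ∃ i, p i ≠ p' i := by
    by_contra h
    push_neg at h
    exact hpp' (funext h)
  obtain ⟨i, hi⟩ := hex
  refine ⟨_, ⟨chi (Pi.single i 1),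
    (Submodule.subset_span ⟨_, rfl⟩ : _ ∈ Submodule.span ℂ (Set.range chi)), rfl⟩, ?_⟩
  simp only [chi_single]
  intro h
  exact hi (injective_toCircle one_ne_zero (Circle.coe_injective h))

lemma dense_AA (F : C(XT, ℂ)) : F ∈ closure (AA : Set C(XT, ℂ)) := by
  have h := ContinuousMap.starSubalgebra_topologicalClosure_eq_top_of_separatesPoints AA AA_sep
  have : F ∈ AA.topologicalClosure := by rw [h]; trivial
  exact this

def mexp (m : Fin 3 → ℤ) (x : X3) : ℂ :=
  ∏ i, Complex.exp (2 * (π : ℂ) * Complex.I * (m i : ℂ) * (x i : ℂ))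

lemma chi_qmap (m : Fin 3 → ℤ) (x : X3) : chi m (qmap x) = mexp m x := by
  rw [chi_apply, mexp]
  refine Finset.prod_congr rfl fun i _ => ?_
  rw [show qmap x i = ((x i : ℝ) : T1) from rfl, fourier_coe_apply]
  norm_num

lemma gauss_prod (ε : ℝ) (x : X3) :
    Real.exp (-(ε * π * ∑ i, x i ^ 2)) = ∏ i, Real.exp (-(ε * π) * x i ^ 2) := by
  rw [← Real.exp_sum]
  congr 1
  rw [Finset.mul_sum, ← Finset.sum_neg_distrib]
  exact Finset.sum_congr rfl fun i _ => by ring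

lemma integrable_gauss {ε : ℝ} (hε : 0 < ε) :
    Integrable (fun x : X3 => Real.exp (-(ε * π * ∑ i, x i ^ 2))) := by
  have h := MeasureTheory.Integrable.fintype_prod (ι := Fin 3) (E := ℝ)
    (f := fun (_ : Fin 3) (t : ℝ) => Real.exp (-(ε * π) * t ^ 2))
    (fun _ => integrable_exp_neg_mul_sq (by positivity))
  exact h.congr (Filter.Eventually.of_forall fun x => (gauss_prod ε x).symm)

lemma integral_gauss {ε : ℝ} (hε : 0 < ε) :
    ∫ x : X3, Real.exp (-(ε * π * ∑ i, x i ^ 2)) = ((1 / ε) ^ ((1 : ℝ) / 2)) ^ (3 : ℕ) := by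
  simp_rw [gauss_prod]
  rw [MeasureTheory.integral_fintype_prod_volume_eq_prod (ι := Fin 3)
    (f := fun _ (t : ℝ) => Real.exp (-(ε * π) * t ^ 2))]
  rw [integral_gaussian, Finset.prod_const]
  have h1 : π / (ε * π) = 1 / ε := by
    field_simp
  rw [h1, Real.sqrt_eq_rpow]
  simp

lemma integrable_gauss_smul {ε : ℝ} (hε : 0 < ε) (g : X3 → ℂ) (hg : Continuous g)
    (C : ℝ) (hC : ∀ x, ‖g x‖ ≤ C) :
    Integrable (fun x : X3 => Real.exp (-(ε * π * ∑ i, x i ^ 2)) • g x) := by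
  have h1 : Integrable (fun x : X3 => ((Real.exp (-(ε * π * ∑ i, x i ^ 2)) : ℝ) : ℂ)) :=
    (integrable_gauss hε).ofReal
  have h2 := h1.bdd_mul hg.aestronglyMeasurable (Filter.Eventually.of_forall hC)
  exact h2.congr (Filter.Eventually.of_forall fun x => by
    simp only [Complex.real_smul]
    ring)

lemma coef_one {ε : ℝ} (hε : 0 < ε) :
    ε ^ ((3 : ℝ) / 2) * ((1 / ε) ^ ((1 : ℝ) / 2)) ^ (3 : ℕ) = 1 := by
  rw [← Real.rpow_natCast ((1 / ε) ^ ((1 : ℝ) / 2)) 3, ← Real.rpow_mul (by positivity)]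
  norm_num
  rw [← Real.mul_rpow hε.le (by positivity), mul_inv_cancel₀ hε.ne', Real.one_rpow]

lemma smul_integral_bound {ε : ℝ} (hε : 0 < ε) (g : X3 → ℂ) (hg : Continuous g)
    {C : ℝ} (hC0 : 0 ≤ C) (hC : ∀ x, ‖g x‖ ≤ C) :
    ‖(ε ^ ((3 : ℝ) / 2)) • ∫ x : X3, Real.exp (-(ε * π * ∑ i, x i ^ 2)) • g x‖ ≤ C := by
  have hint := integrable_gauss_smul hε g hg C hC
  have h1 : ‖∫ x : X3, Real.exp (-(ε * π * ∑ i, x i ^ 2)) • g x‖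
      ≤ C * ((1 / ε) ^ ((1 : ℝ) / 2)) ^ (3 : ℕ) := by
    calc ‖∫ x : X3, Real.exp (-(ε * π * ∑ i, x i ^ 2)) • g x‖
        ≤ ∫ x : X3, ‖Real.exp (-(ε * π * ∑ i, x i ^ 2)) • g x‖ :=
          MeasureTheory.norm_integral_le_integral_norm _
      _ ≤ ∫ x : X3, C * Real.exp (-(ε * π * ∑ i, x i ^ 2)) := by
          refine MeasureTheory.integral_mono hint.norm ((integrable_gauss hε).const_mul C) ?_
          intro x
          dsimp only
          rw [norm_smul, Real.norm_eq_abs, abs_of_pos (Real.exp_pos _), mul_comm]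
          exact mul_le_mul_of_nonneg_right (hC x) (Real.exp_pos _).le
      _ = C * ((1 / ε) ^ ((1 : ℝ) / 2)) ^ (3 : ℕ) := by
          rw [MeasureTheory.integral_const_mul, integral_gauss hε]
  calc ‖(ε ^ ((3 : ℝ) / 2)) • ∫ x : X3, Real.exp (-(ε * π * ∑ i, x i ^ 2)) • g x‖
      = ε ^ ((3 : ℝ) / 2) * ‖∫ x : X3, Real.exp (-(ε * π * ∑ i, x i ^ 2)) • g x‖ := by
        rw [norm_smul, Real.norm_eq_abs, _root_.abs_of_nonneg (Real.rpow_nonneg hε.le _)]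
    _ ≤ ε ^ ((3 : ℝ) / 2) * (C * ((1 / ε) ^ ((1 : ℝ) / 2)) ^ (3 : ℕ)) := by
        exact mul_le_mul_of_nonneg_left h1 (Real.rpow_nonneg hε.le _)
    _ = C * (ε ^ ((3 : ℝ) / 2) * ((1 / ε) ^ ((1 : ℝ) / 2)) ^ (3 : ℕ)) := by ring
    _ = C := by rw [coef_one hε, mul_one]

lemma one_dim {ε : ℝ} (hε : 0 < ε) (k : ℤ) :
    (∫ t : ℝ, Complex.exp (((-(ε * π) : ℝ) : ℂ) * (t : ℂ) ^ 2
        + (2 * (π : ℂ) * Complex.I * (k : ℂ)) * (t : ℂ) + 0))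
      = (((1 / ε) ^ ((1 : ℝ) / 2) : ℝ) : ℂ)
        * Complex.exp (((-(π * (k : ℝ) ^ 2) / ε : ℝ) : ℂ)) := by
  have hb : (((-(ε * π) : ℝ) : ℂ)).re < 0 := by
    simpa using mul_pos hε pi_pos
  rw [integral_cexp_quadratic hb]
  have h1 : ((π : ℂ)) / -(((-(ε * π) : ℝ)) : ℂ) = (((1 / ε : ℝ)) : ℂ) := by
    push_cast
    rw [neg_neg]
    have hεc : (ε : ℂ) ≠ 0 := Complex.ofReal_ne_zero.mpr hε.ne'
    have hπc : ((π : ℝ) : ℂ) ≠ 0 := Complex.ofReal_ne_zero.mpr pi_ne_zero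
    field_simp
  have h2 : (0 : ℂ) - (2 * (π : ℂ) * Complex.I * (k : ℂ)) ^ 2 / (4 * (((-(ε * π) : ℝ)) : ℂ))
      = (((-(π * (k : ℝ) ^ 2) / ε : ℝ)) : ℂ) := by
    have hsq : (2 * (π : ℂ) * Complex.I * (k : ℂ)) ^ 2
        = -(4 * (π : ℂ) ^ 2 * (k : ℂ) ^ 2) := by
      rw [mul_pow, mul_pow, mul_pow, Complex.I_sq]; ring
    rw [hsq]
    have hεc : (ε : ℂ) ≠ 0 := Complex.ofReal_ne_zero.mpr hε.ne'
    have hπc : ((π : ℝ) : ℂ) ≠ 0 := Complex.ofReal_ne_zero.mpr pi_ne_zero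
    push_cast
    field_simp
    ring
  rw [h1, h2, show (1 / 2 : ℂ) = (((1 : ℝ) / 2 : ℝ) : ℂ) by norm_num,
    ← Complex.ofReal_cpow (by positivity)]

lemma full_mono {ε : ℝ} (hε : 0 < ε) (m : Fin 3 → ℤ) :
    (ε ^ ((3 : ℝ) / 2)) • ∫ x : X3, Real.exp (-(ε * π * ∑ i, x i ^ 2)) • mexp m x
      = ((Real.exp (-(π * ∑ i, ((m i : ℝ)) ^ 2) / ε) : ℝ) : ℂ) := by
  have hpt : ∀ x : X3, Real.exp (-(ε * π * ∑ i, x i ^ 2)) • mexp m x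
      = ∏ i, Complex.exp (((-(ε * π) : ℝ) : ℂ) * ((x i : ℝ) : ℂ) ^ 2
          + (2 * (π : ℂ) * Complex.I * (m i : ℂ)) * ((x i : ℝ) : ℂ) + 0) := by
    intro x
    rw [gauss_prod, mexp, Complex.real_smul, Complex.ofReal_prod, ← Finset.prod_mul_distrib]
    refine Finset.prod_congr rfl fun i _ => ?_
    rw [Complex.ofReal_exp, ← Complex.exp_add]
    congr 1
    push_cast
    ring
  simp_rw [hpt]
  rw [MeasureTheory.integral_fintype_prod_volume_eq_prod (ι := Fin 3)
    (f := fun i (t : ℝ) => Complex.exp (((-(ε * π) : ℝ) : ℂ) * ((t : ℝ) : ℂ) ^ 2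
      + (2 * (π : ℂ) * Complex.I * (m i : ℂ)) * ((t : ℝ) : ℂ) + 0))]
  rw [Finset.prod_congr rfl fun i (_ : i ∈ Finset.univ) => one_dim hε (m i),
    Finset.prod_mul_distrib, Finset.prod_const, ← Complex.exp_sum,
    Finset.card_univ, Fintype.card_fin]
  have hsum : (∑ i, (((-(π * ((m i : ℝ)) ^ 2) / ε : ℝ)) : ℂ))
      = ((-(π * ∑ i, ((m i : ℝ)) ^ 2) / ε : ℝ) : ℂ) := by
    push_cast
    rw [Finset.mul_sum, ← Finset.sum_neg_distrib, Finset.sum_div]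
  rw [hsum, Complex.real_smul, ← mul_assoc, ← Complex.ofReal_pow, ← Complex.ofReal_mul,
    coef_one hε, Complex.ofReal_one, one_mul, ← Complex.ofReal_exp]

open intervalIntegral in
lemma one_cube (k : ℤ) :
    (∫ t in Set.Icc (0 : ℝ) 1, Complex.exp (2 * (π : ℂ) * Complex.I * (k : ℂ) * (t : ℂ)))
      = if k = 0 then 1 else 0 := by
  by_cases hk : k = 0
  · subst hk
    simp [MeasureTheory.setIntegral_const, Real.volume_Icc]
  · rw [if_neg hk, MeasureTheory.integral_Icc_eq_integral_Ioc]
    rw [show (∫ t in Set.Ioc (0 : ℝ) 1,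
        Complex.exp (2 * (π : ℂ) * Complex.I * (k : ℂ) * (t : ℂ)))
      = ∫ t in (0 : ℝ)..1, Complex.exp (2 * (π : ℂ) * Complex.I * (k : ℂ) * (t : ℂ)) from
      (integral_of_le (zero_le_one)).symm]
    have hc : (2 * (π : ℂ) * Complex.I * (k : ℂ)) ≠ 0 :=
      mul_ne_zero (mul_ne_zero (mul_ne_zero two_ne_zero
        (Complex.ofReal_ne_zero.mpr pi_ne_zero)) Complex.I_ne_zero)
        (Int.cast_ne_zero.mpr hk)
    rw [show (∫ t in (0 : ℝ)..1,
        Complex.exp (2 * (π : ℂ) * Complex.I * (k : ℂ) * (t : ℂ)))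
      = (Complex.exp (2 * (π : ℂ) * Complex.I * (k : ℂ) * ((1 : ℝ) : ℂ))
          - Complex.exp (2 * (π : ℂ) * Complex.I * (k : ℂ) * ((0 : ℝ) : ℂ)))
          / (2 * (π : ℂ) * Complex.I * (k : ℂ)) from
      integral_exp_mul_complex hc]
    rw [Complex.ofReal_one, mul_one, Complex.ofReal_zero, mul_zero, Complex.exp_zero]
    have h1 : Complex.exp (2 * (π : ℂ) * Complex.I * (k : ℂ)) = 1 := by
      rw [show 2 * (π : ℂ) * Complex.I * (k : ℂ) = (k : ℂ) * (2 * (π : ℂ) * Complex.I) by ring]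
      exact Complex.exp_int_mul_two_pi_mul_I k
    rw [h1, sub_self, zero_div]

lemma cube_mexp (m : Fin 3 → ℤ) :
    ∫ x in cube, mexp m x = ∏ i, (if m i = 0 then (1 : ℂ) else 0) := by
  rw [cube, ← MeasureTheory.integral_indicator measurableSet_Icc]
  have hpt : (Set.Icc (0 : X3) 1).indicator (mexp m) = fun x => ∏ i,
      (Set.Icc (0 : ℝ) 1).indicator
        (fun t => Complex.exp (2 * (π : ℂ) * Complex.I * (m i : ℂ) * (t : ℂ))) (x i) := by
    funext x
    by_cases hx : x ∈ Set.Icc (0 : X3) 1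
    · rw [Set.indicator_of_mem hx, mexp]
      have hxi : ∀ i, x i ∈ Set.Icc (0 : ℝ) 1 := fun i => ⟨hx.1 i, hx.2 i⟩
      exact Finset.prod_congr rfl fun i _ => (Set.indicator_of_mem (hxi i)
        (fun t : ℝ => Complex.exp (2 * (π : ℂ) * Complex.I * (m i : ℂ) * (t : ℂ)))).symm
    · rw [Set.indicator_of_notMem hx]
      have hex : ∃ i, x i ∉ Set.Icc (0 : ℝ) 1 := by
        by_contra h
        push_neg at h
        exact hx ⟨fun i => (h i).1, fun i => (h i).2⟩
      obtain ⟨i, hi⟩ := hex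
      exact (Finset.prod_eq_zero (Finset.mem_univ i) (Set.indicator_of_notMem hi _)).symm
  rw [hpt, MeasureTheory.integral_fintype_prod_volume_eq_prod (ι := Fin 3)
    (f := fun i (t : ℝ) => (Set.Icc (0 : ℝ) 1).indicator
      (fun t => Complex.exp (2 * (π : ℂ) * Complex.I * (m i : ℂ) * (t : ℂ))) t)]
  refine Finset.prod_congr rfl fun i _ => ?_
  rw [MeasureTheory.integral_indicator measurableSet_Icc]
  exact one_cube (m i)

lemma tendsto_mexp (m : Fin 3 → ℤ) :
    Tendsto (fun ε : ℝ => (ε ^ ((3 : ℝ) / 2)) •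
        ∫ x : X3, Real.exp (-(ε * π * ∑ i, x i ^ 2)) • mexp m x)
      (𝓝[>] (0 : ℝ)) (𝓝 (∫ x in cube, mexp m x)) := by
  have hev : (fun ε : ℝ => (ε ^ ((3 : ℝ) / 2)) •
        ∫ x : X3, Real.exp (-(ε * π * ∑ i, x i ^ 2)) • mexp m x)
      =ᶠ[𝓝[>] (0 : ℝ)]
        fun ε => ((Real.exp (-(π * ∑ i, ((m i : ℝ)) ^ 2) / ε) : ℝ) : ℂ) :=
    Filter.eventuallyEq_of_mem self_mem_nhdsWithin fun ε hε => full_mono hε m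
  rw [cube_mexp m]
  refine Tendsto.congr' hev.symm ?_
  by_cases hm : ∀ i, m i = 0
  · have h0 : (∑ i, ((m i : ℝ)) ^ 2) = 0 :=
      Finset.sum_eq_zero fun i _ => by rw [hm i]; norm_num
    have h1 : (∏ i, (if m i = 0 then (1 : ℂ) else 0)) = 1 :=
      Finset.prod_eq_one fun i _ => by rw [if_pos (hm i)]
    rw [h1]
    have : (fun ε : ℝ => ((Real.exp (-(π * ∑ i, ((m i : ℝ)) ^ 2) / ε) : ℝ) : ℂ))
        = fun _ => (1 : ℂ) := by
      funext ε
      rw [h0, mul_zero, neg_zero, zero_div, Real.exp_zero, Complex.ofReal_one]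
    rw [this]
    exact tendsto_const_nhds
  · push_neg at hm
    obtain ⟨i, hi⟩ := hm
    have hprod : (∏ i, (if m i = 0 then (1 : ℂ) else 0)) = 0 :=
      Finset.prod_eq_zero (Finset.mem_univ i) (if_neg hi)
    rw [hprod]
    have hS : 0 < π * ∑ i, ((m i : ℝ)) ^ 2 := by
      refine mul_pos pi_pos ?_
      refine Finset.sum_pos' (fun j _ => sq_nonneg _) ⟨i, Finset.mem_univ i, ?_⟩
      have hne : ((m i : ℝ)) ≠ 0 := Int.cast_ne_zero.mpr hi
      exact lt_of_le_of_ne (sq_nonneg _) (Ne.symm (pow_ne_zero 2 hne))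
    have hreal : Tendsto (fun ε : ℝ => Real.exp (-(π * ∑ i, ((m i : ℝ)) ^ 2) / ε))
        (𝓝[>] (0 : ℝ)) (𝓝 0) := by
      have h1 : Tendsto (fun ε : ℝ => (π * ∑ i, ((m i : ℝ)) ^ 2) * ε⁻¹)
          (𝓝[>] (0 : ℝ)) atTop := tendsto_inv_nhdsGT_zero.const_mul_atTop hS
      have h2 := Real.tendsto_exp_neg_atTop_nhds_zero.comp h1
      refine h2.congr fun ε => ?_
      simp only [Function.comp_apply]
      rw [neg_div, div_eq_mul_inv]
    rw [show (0 : ℂ) = ((0 : ℝ) : ℂ) by norm_num]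
    exact ((Complex.continuous_ofReal.tendsto (0 : ℝ)).comp hreal).congr fun ε => rfl

lemma integrableOn_cube (g : X3 → ℂ) (hg : Continuous g) : IntegrableOn g cube :=
  hg.continuousOn.integrableOn_compact isCompact_Icc

lemma volume_cube : volume cube = 1 := by
  rw [cube, ← Set.pi_univ_Icc, volume_pi, MeasureTheory.Measure.pi_pi]
  simp [Real.volume_Icc]

lemma tendsto_of_mem_span (g : C(XT, ℂ)) (hg : g ∈ Submodule.span ℂ (Set.range chi)) :
    Tendsto (fun ε : ℝ => (ε ^ ((3 : ℝ) / 2)) •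
        ∫ x : X3, Real.exp (-(ε * π * ∑ i, x i ^ 2)) • g (qmap x))
      (𝓝[>] (0 : ℝ)) (𝓝 (∫ x in cube, g (qmap x))) := by
  induction hg using Submodule.span_induction with
  | mem u hu =>
    obtain ⟨m, rfl⟩ := hu
    simp_rw [chi_qmap]
    exact tendsto_mexp m
  | zero =>
    simp only [ContinuousMap.zero_apply, smul_zero, MeasureTheory.integral_zero]
    simpa using tendsto_const_nhds
  | add u v hu hv ihu ihv =>
    have hev : (fun ε : ℝ => (ε ^ ((3 : ℝ) / 2)) •
          ∫ x : X3, Real.exp (-(ε * π * ∑ i, x i ^ 2)) • (u + v) (qmap x))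
        =ᶠ[𝓝[>] (0 : ℝ)]
          fun ε => ((ε ^ ((3 : ℝ) / 2)) •
              ∫ x : X3, Real.exp (-(ε * π * ∑ i, x i ^ 2)) • u (qmap x))
            + ((ε ^ ((3 : ℝ) / 2)) •
              ∫ x : X3, Real.exp (-(ε * π * ∑ i, x i ^ 2)) • v (qmap x)) := by
      refine Filter.eventuallyEq_of_mem self_mem_nhdsWithin fun ε hε => ?_
      have hε' : (0 : ℝ) < ε := hε
      have hiu := integrable_gauss_smul hε' (fun x => u (qmap x))
        (u.continuous.comp continuous_qmap) ‖u‖ (fun x => u.norm_coe_le_norm _)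
      have hiv := integrable_gauss_smul hε' (fun x => v (qmap x))
        (v.continuous.comp continuous_qmap) ‖v‖ (fun x => v.norm_coe_le_norm _)
      have hfn : (fun x : X3 => Real.exp (-(ε * π * ∑ i, x i ^ 2)) • (u + v) (qmap x))
          = fun x => Real.exp (-(ε * π * ∑ i, x i ^ 2)) • u (qmap x)
            + Real.exp (-(ε * π * ∑ i, x i ^ 2)) • v (qmap x) :=
        funext fun x => by rw [ContinuousMap.add_apply, smul_add]
      rw [hfn, MeasureTheory.integral_add hiu hiv, smul_add]
    refine Tendsto.congr' hev.symm ?_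
    have hcube : (∫ x in cube, (u + v) (qmap x))
        = (∫ x in cube, u (qmap x)) + ∫ x in cube, v (qmap x) := by
      simp_rw [ContinuousMap.add_apply]
      exact MeasureTheory.integral_add
        (integrableOn_cube _ (u.continuous.comp continuous_qmap))
        (integrableOn_cube _ (v.continuous.comp continuous_qmap))
    rw [hcube]
    exact ihu.add ihv
  | smul c u hu ihu =>
    have hfn : ∀ ε : ℝ, (ε ^ ((3 : ℝ) / 2)) •
          (∫ x : X3, Real.exp (-(ε * π * ∑ i, x i ^ 2)) • (c • u) (qmap x))
        = c • ((ε ^ ((3 : ℝ) / 2)) •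
          ∫ x : X3, Real.exp (-(ε * π * ∑ i, x i ^ 2)) • u (qmap x)) := by
      intro ε
      have h1 : (fun x : X3 => Real.exp (-(ε * π * ∑ i, x i ^ 2)) • (c • u) (qmap x))
          = fun x => c • (Real.exp (-(ε * π * ∑ i, x i ^ 2)) • u (qmap x)) :=
        funext fun x => by rw [ContinuousMap.smul_apply, smul_comm]
      rw [h1, MeasureTheory.integral_smul, smul_comm]
    have hcube : (∫ x in cube, (c • u) (qmap x)) = c • ∫ x in cube, u (qmap x) := by
      simp_rw [ContinuousMap.smul_apply]
      exact MeasureTheory.integral_smul c _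
    simp only [hfn]
    rw [hcube]
    exact ihu.const_smul c

end Statement14Aux

open Statement14Aux in
/-- equation (2.7): Gaussian sampling of periodic functions,
`lim_{ε→0⁺} ε^{3/2} ∫_{ℝ³} f(x) e^{-επ|x|²} dx = ∫_{T³} f`. -/
theorem statement14 (f : X3 → ℂ) (hf : Continuous f)
    (hper : ∀ (k : Fin 3 → ℤ) (x : X3), f (x + fun i => (k i : ℝ)) = f x) :
    Tendsto (fun ε : ℝ => (ε ^ ((3 : ℝ) / 2)) •
        ∫ x : X3, Real.exp (-(ε * π * ∑ i, x i ^ 2)) • f x)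
      (𝓝[>] (0 : ℝ)) (𝓝 (∫ x in cube, f x)) := by
  classical
  have hFq0 : ∀ x : X3, (fun p : XT => f (fun i => (p i).out)) (qmap x) = f x := by
    intro x
    have h : ∀ i : Fin 3, ∃ k : ℤ, ((x i : T1)).out = x i + (k : ℝ) := by
      intro i
      have h1 : ((((x i : T1)).out : ℝ) : T1) = (x i : T1) := QuotientAddGroup.out_eq' _
      rw [QuotientAddGroup.eq] at h1
      obtain ⟨k, hk⟩ := h1
      refine ⟨-k, ?_⟩
      have hk' : (k : ℝ) = -(((x i : T1)).out) + x i := by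
        simpa using hk
      push_cast
      linarith
    choose k hk using h
    have hxk : (fun i => ((x i : T1)).out) = x + fun i => ((k i : ℝ)) :=
      funext fun i => by rw [hk i]; rfl
    show f (fun i => ((qmap x i).out)) = f x
    calc f (fun i => ((qmap x i).out)) = f (x + fun i => ((k i : ℝ))) := by rw [← hxk]; rfl
    _ = f x := hper k x
  have hFcont : Continuous (fun p : XT => f (fun i => (p i).out)) := by
    rw [isOpenQuotientMap_qmap.isQuotientMap.continuous_iff]
    exact hf.congr fun x => (hFq0 x).symm
  set Fc : C(XT, ℂ) := ⟨fun p => f (fun i => (p i).out), hFcont⟩ with hFcdef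
  have hFq : ∀ x : X3, Fc (qmap x) = f x := hFq0
  rw [Metric.tendsto_nhds]
  intro δ hδ
  obtain ⟨g, hgA, hdist⟩ := Metric.mem_closure_iff.mp (dense_AA Fc) (δ / 4) (by positivity)
  have hgspan : g ∈ Submodule.span ℂ (Set.range chi) := hgA
  have hsup : ∀ p : XT, ‖Fc p - g p‖ ≤ δ / 4 := fun p => by
    calc ‖Fc p - g p‖ = dist (Fc p) (g p) := (dist_eq_norm _ _).symm
    _ ≤ dist Fc g := ContinuousMap.dist_apply_le_dist p
    _ ≤ δ / 4 := hdist.le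
  have hfb : ∀ x : X3, ‖f x - g (qmap x)‖ ≤ δ / 4 := fun x => by
    rw [← hFq x]; exact hsup (qmap x)
  have hgt := tendsto_of_mem_span g hgspan
  have hev1 := Metric.tendsto_nhds.mp hgt (δ / 4) (by positivity)
  have hgqc : Continuous fun x : X3 => g (qmap x) := g.continuous.comp continuous_qmap
  filter_upwards [hev1, self_mem_nhdsWithin] with ε h1 hε
  have hε' : (0 : ℝ) < ε := hε
  have hint_f : Integrable (fun x : X3 => Real.exp (-(ε * π * ∑ i, x i ^ 2)) • f x) := by
    refine integrable_gauss_smul hε' f hf ‖Fc‖ fun x => ?_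
    rw [← hFq x]
    exact Fc.norm_coe_le_norm _
  have hint_g : Integrable (fun x : X3 => Real.exp (-(ε * π * ∑ i, x i ^ 2)) • g (qmap x)) :=
    integrable_gauss_smul hε' _ hgqc ‖g‖ fun x => g.norm_coe_le_norm _
  set A : ℂ := (ε ^ ((3 : ℝ) / 2)) • ∫ x : X3, Real.exp (-(ε * π * ∑ i, x i ^ 2)) • f x with hA
  set B : ℂ := (ε ^ ((3 : ℝ) / 2)) •
    ∫ x : X3, Real.exp (-(ε * π * ∑ i, x i ^ 2)) • g (qmap x) with hB
  set C1 : ℂ := ∫ x in cube, g (qmap x) with hC1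
  set D1 : ℂ := ∫ x in cube, f x with hD1
  have hd1 : dist A B ≤ δ / 4 := by
    rw [hA, hB, dist_eq_norm, ← smul_sub, ← MeasureTheory.integral_sub hint_f hint_g]
    have hfn : (fun x : X3 => Real.exp (-(ε * π * ∑ i, x i ^ 2)) • f x
        - Real.exp (-(ε * π * ∑ i, x i ^ 2)) • g (qmap x))
        = fun x => Real.exp (-(ε * π * ∑ i, x i ^ 2)) • (f x - g (qmap x)) :=
      funext fun x => (smul_sub _ _ _).symm
    rw [hfn]
    exact smul_integral_bound hε' _ (hf.sub hgqc) (by positivity) hfb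
  have hd3 : dist C1 D1 ≤ δ / 4 := by
    rw [hC1, hD1, dist_eq_norm, ← MeasureTheory.integral_sub (integrableOn_cube _ hgqc)
      (integrableOn_cube _ hf)]
    have hb := MeasureTheory.norm_setIntegral_le_of_norm_le_const (μ := volume) (s := cube)
      (f := fun x => g (qmap x) - f x) (C := δ / 4)
      (by rw [volume_cube]; exact ENNReal.one_lt_top)
      (fun x _ => by rw [norm_sub_rev]; exact hfb x)
    calc ‖∫ x in cube, (g (qmap x) - f x)‖ ≤ δ / 4 * (volume cube).toReal := hb
      _ = δ / 4 := by rw [volume_cube]; simp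
  have htri : dist A D1 ≤ dist A B + dist B C1 + dist C1 D1 := dist_triangle4 A B C1 D1
  have hBC : dist B C1 < δ / 4 := h1
  calc dist A D1 ≤ dist A B + dist B C1 + dist C1 D1 := htri
    _ < δ := by linarith
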